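/- Let G be the covalent modification network (n,m,φ) with bifunctional enzyme C_α, where φ: [1,m] → [1,N] is injective. Then the deficiency of G equals 0 if [1,n] ∩ φ([1,m]) = ∅, and equals #([1,n] ∩ φ([1,m])) − 1 otherwise. -/

import Mathlib

open Finset

/-- Indicator vector of substrate species `S i` (coded at index `4 i`). -/
noncomputable def eS (i : ℕ) : ℕ → ℝ := Pi.single (4 * i) 1
/-- Indicator vector of the enzyme `E` (coded at index `1`). -/
noncomputable def eE : ℕ → ℝ := Pi.single 1 1
/-- Indicator vector of the intermediate complex `C i` (coded at index `4 i + 2`). -/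
noncomputable def eC (i : ℕ) : ℕ → ℝ := Pi.single (4 * i + 2) 1
/-- Indicator vector of the intermediate complex `D j` (coded at index `4 j + 3`). -/
noncomputable def eD (j : ℕ) : ℕ → ℝ := Pi.single (4 * j + 3) 1

/-- The set of reaction vectors of the covalent modification network `(n, m, φ)`
with bifunctional enzyme `C α`: forward chain `S i + E ⇌ C i → S (i+1) + E` for
`i ∈ [1, n-1]`, backward chain `S (φ j) + C α ⇌ D j → S (φ (j+1)) + C α` for
`j ∈ [1, m-1]`. -/
def CMNReactionVectors (n m α : ℕ) (φ : ℕ → ℕ) : Set (ℕ → ℝ) :=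
  {v | (∃ i, 1 ≤ i ∧ i ≤ n - 1 ∧
          (v = eC i - eS i - eE ∨ v = eS i + eE - eC i ∨ v = eS (i + 1) + eE - eC i))
    ∨ (∃ j, 1 ≤ j ∧ j ≤ m - 1 ∧
          (v = eD j - eS (φ j) - eC α ∨ v = eS (φ j) + eC α - eD j
            ∨ v = eS (φ (j + 1)) + eC α - eD j))}

namespace CMNAux


noncomputable def bvec (α : ℕ) (φ c : ℕ → ℕ) {T₁ T₂ T₃ : Finset ℕ} :
    (↥T₁ ⊕ ↥T₂ ⊕ ↥T₃) → (ℕ → ℝ)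
  | .inl i => eC i - eS i - eE
  | .inr (.inl j) => eD j - eS (φ j) - eC α
  | .inr (.inr x) => eS x - eS (c x)

lemma eS_apply (i t : ℕ) : eS i t = if t = 4 * i then 1 else 0 := Pi.single_apply _ _ _
lemma eE_apply (t : ℕ) : eE t = if t = 1 then 1 else 0 := Pi.single_apply _ _ _
lemma eC_apply (i t : ℕ) : eC i t = if t = 4 * i + 2 then 1 else 0 := Pi.single_apply _ _ _
lemma eD_apply (j t : ℕ) : eD j t = if t = 4 * j + 3 then 1 else 0 := Pi.single_apply _ _ _

lemma bvec_li (α : ℕ) (φ c : ℕ → ℕ) (T₁ T₂ T₃ : Finset ℕ)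
    (hc : ∀ x ∈ T₃, c x ∉ T₃) :
    LinearIndependent ℝ (bvec α φ c : (↥T₁ ⊕ ↥T₂ ⊕ ↥T₃) → (ℕ → ℝ)) := by
  rw [Fintype.linearIndependent_iff]
  intro g hg
  have key : ∀ t : ℕ, (∑ i, g i * (bvec α φ c (T₁ := T₁) (T₂ := T₂) (T₃ := T₃) i t)) = 0 := by
    intro t
    have h := congrFun hg t
    simpa [Finset.sum_apply] using h
  -- Step 1 : D coefficients vanish
  have hD : ∀ j : ↥T₂, g (.inr (.inl j)) = 0 := by
    intro j
    have h0 := key (4 * (j : ℕ) + 3)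
    rw [Fintype.sum_sum_type, Fintype.sum_sum_type] at h0
    rw [Fintype.sum_eq_zero _ (fun i : ↥T₁ => by
        have h1 : ¬(4 * (j : ℕ) + 3 = 4 * (i : ℕ) + 2) := by omega
        have h2 : ¬(4 * (j : ℕ) + 3 = 4 * (i : ℕ)) := by omega
        have h3 : ¬(4 * (j : ℕ) + 3 = 1) := by omega
        simp [bvec, eS_apply, eE_apply, eC_apply, eD_apply, h1, h2, h3])] at h0
    rw [Fintype.sum_eq_single j (fun j' hj' => by
        have h1 : ¬(4 * (j : ℕ) + 3 = 4 * (j' : ℕ) + 3) := by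
          intro h; exact hj' (Subtype.ext (by omega))
        have h2 : ¬(4 * (j : ℕ) + 3 = 4 * (φ (j' : ℕ))) := by omega
        have h3 : ¬(4 * (j : ℕ) + 3 = 4 * α + 2) := by omega
        simp [bvec, eS_apply, eE_apply, eC_apply, eD_apply, h1, h2, h3, hj'.symm])] at h0
    rw [Fintype.sum_eq_zero _ (fun x : ↥T₃ => by
        have h1 : ¬(4 * (j : ℕ) + 3 = 4 * (x : ℕ)) := by omega
        have h2 : ¬(4 * (j : ℕ) + 3 = 4 * (c (x : ℕ))) := by omega
        simp [bvec, eS_apply, eE_apply, eC_apply, eD_apply, h1, h2])] at h0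
    have h3 : ¬(4 * (j : ℕ) + 3 = 4 * (φ (j : ℕ))) := by omega
    have h4 : ¬(4 * (j : ℕ) + 3 = 4 * α + 2) := by omega
    simpa [bvec, eS_apply, eE_apply, eC_apply, eD_apply, h3, h4] using h0
  -- Step 2 : C coefficients vanish
  have hC : ∀ i : ↥T₁, g (.inl i) = 0 := by
    intro i
    have h0 := key (4 * (i : ℕ) + 2)
    rw [Fintype.sum_sum_type, Fintype.sum_sum_type] at h0
    rw [Fintype.sum_eq_zero _ (fun j : ↥T₂ => by rw [hD j, zero_mul])] at h0
    rw [Fintype.sum_eq_zero _ (fun x : ↥T₃ => by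
        have h1 : ¬(4 * (i : ℕ) + 2 = 4 * (x : ℕ)) := by omega
        have h2 : ¬(4 * (i : ℕ) + 2 = 4 * (c (x : ℕ))) := by omega
        simp [bvec, eS_apply, h1, h2])] at h0
    rw [Fintype.sum_eq_single i (fun i' hi' => by
        have h1 : ¬(4 * (i : ℕ) + 2 = 4 * (i' : ℕ) + 2) := by
          intro h; exact hi' (Subtype.ext (by omega))
        have h2 : ¬(4 * (i : ℕ) + 2 = 4 * (i' : ℕ)) := by omega
        have h3 : ¬(4 * (i : ℕ) + 2 = 1) := by omega
        simp [bvec, eS_apply, eE_apply, eC_apply, h1, h2, h3, hi'.symm])] at h0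
    have h2 : ¬(4 * (i : ℕ) + 2 = 4 * (i : ℕ)) := by omega
    have h3 : ¬(4 * (i : ℕ) + 2 = 1) := by omega
    simpa [bvec, eS_apply, eE_apply, eC_apply, h2, h3] using h0
  -- Step 3 : S coefficients vanish
  have hS : ∀ x : ↥T₃, g (.inr (.inr x)) = 0 := by
    intro x
    have h0 := key (4 * (x : ℕ))
    rw [Fintype.sum_sum_type, Fintype.sum_sum_type] at h0
    rw [Fintype.sum_eq_zero _ (fun i : ↥T₁ => by rw [hC i, zero_mul])] at h0
    rw [Fintype.sum_eq_zero _ (fun j : ↥T₂ => by rw [hD j, zero_mul])] at h0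
    rw [Fintype.sum_eq_single x (fun x' hx' => by
        have h1 : ¬(4 * (x : ℕ) = 4 * (x' : ℕ)) := by
          intro h; exact hx' (Subtype.ext (by omega))
        have h2 : ¬(4 * (x : ℕ) = 4 * (c (x' : ℕ))) := by
          intro h
          have : c (x' : ℕ) = (x : ℕ) := by omega
          exact hc _ x'.2 (by rw [this]; exact x.2)
        simp [bvec, eS_apply, h1, h2])] at h0
    have h2 : ¬(4 * (x : ℕ) = 4 * (c (x : ℕ))) := by
      intro h
      have : c (x : ℕ) = (x : ℕ) := by omega
      exact hc _ x.2 (by rw [this]; exact x.2)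
    simpa [bvec, eS_apply, h2] using h0
  intro i
  rcases i with i | j | x
  · exact hC i
  · exact hD j
  · exact hS x


lemma telescope_le {M : Type*} [AddCommGroup M] [Module ℝ M] (w : ℕ → M)
    (P : Submodule ℝ M) (lo hi : ℕ)
    (h : ∀ t, lo ≤ t → t < hi → w (t + 1) - w t ∈ P) :
    ∀ b, b ≤ hi → ∀ a, lo ≤ a → a ≤ b → w b - w a ∈ P := by
  intro b
  induction b with
  | zero =>
    intro _ a _ hab
    obtain rfl : a = 0 := Nat.le_zero.mp hab
    simpa using P.zero_mem
  | succ b ih =>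
    intro hb a ha hab
    rcases eq_or_lt_of_le hab with rfl | hlt
    · simpa using P.zero_mem
    · have hab' : a ≤ b := Nat.lt_succ_iff.mp hlt
      have hkey : w (b + 1) - w a = (w (b + 1) - w b) + (w b - w a) := by abel
      rw [hkey]
      exact P.add_mem (h b (le_trans ha hab') (by omega)) (ih (by omega) a ha hab')

lemma telescope {M : Type*} [AddCommGroup M] [Module ℝ M] (w : ℕ → M)
    (P : Submodule ℝ M) (lo hi : ℕ)
    (h : ∀ t, lo ≤ t → t < hi → w (t + 1) - w t ∈ P)
    {a b : ℕ} (ha : lo ≤ a) (hb : lo ≤ b) (ha' : a ≤ hi) (hb' : b ≤ hi) :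
    w b - w a ∈ P := by
  rcases le_total a b with hab | hab
  · exact telescope_le w P lo hi h b hb' a ha hab
  · have h2 := telescope_le w P lo hi h a ha' b hb hab
    have : w b - w a = -(w a - w b) := by abel
    rw [this]
    exact P.neg_mem h2

variable (n m α : ℕ) (φ : ℕ → ℕ)

/-- consecutive substrate differences lie in the span of the reaction vectors -/
lemma deltaA_mem {t : ℕ} (ht1 : 1 ≤ t) (ht2 : t < n) :
    eS (t + 1) - eS t ∈ Submodule.span ℝ (CMNReactionVectors n m α φ) := by
  have h1 : (eC t - eS t - eE) ∈ CMNReactionVectors n m α φ :=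
    Or.inl ⟨t, ht1, by omega, Or.inl rfl⟩
  have h2 : (eS (t + 1) + eE - eC t) ∈ CMNReactionVectors n m α φ :=
    Or.inl ⟨t, ht1, by omega, Or.inr (Or.inr rfl)⟩
  have hk : eS (t + 1) - eS t = (eC t - eS t - eE) + (eS (t + 1) + eE - eC t) := by abel
  rw [hk]
  exact add_mem (Submodule.subset_span h1) (Submodule.subset_span h2)

lemma deltaB_mem {t : ℕ} (ht1 : 1 ≤ t) (ht2 : t < m) :
    eS (φ (t + 1)) - eS (φ t) ∈ Submodule.span ℝ (CMNReactionVectors n m α φ) := by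
  have h1 : (eD t - eS (φ t) - eC α) ∈ CMNReactionVectors n m α φ :=
    Or.inr ⟨t, ht1, by omega, Or.inl rfl⟩
  have h2 : (eS (φ (t + 1)) + eC α - eD t) ∈ CMNReactionVectors n m α φ :=
    Or.inr ⟨t, ht1, by omega, Or.inr (Or.inr rfl)⟩
  have hk : eS (φ (t + 1)) - eS (φ t)
      = (eD t - eS (φ t) - eC α) + (eS (φ (t + 1)) + eC α - eD t) := by abel
  rw [hk]
  exact add_mem (Submodule.subset_span h1) (Submodule.subset_span h2)

lemma eSA_mem {x y : ℕ} (hx : 1 ≤ x) (hx' : x ≤ n) (hy : 1 ≤ y) (hy' : y ≤ n) :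
    eS x - eS y ∈ Submodule.span ℝ (CMNReactionVectors n m α φ) :=
  telescope eS _ 1 n (fun t ht1 ht2 => deltaA_mem n m α φ ht1 ht2) hy hx hy' hx'

lemma eSB_mem {a b : ℕ} (ha : 1 ≤ a) (ha' : a ≤ m) (hb : 1 ≤ b) (hb' : b ≤ m) :
    eS (φ b) - eS (φ a) ∈ Submodule.span ℝ (CMNReactionVectors n m α φ) :=
  telescope (fun j => eS (φ j)) _ 1 m (fun t ht1 ht2 => deltaB_mem n m α φ ht1 ht2)
    ha hb ha' hb'

/-- span equality, nonempty intersection case -/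
lemma span_eq_nonempty (hn : 2 ≤ n) (hm : 2 ≤ m)
    (j₀ : ℕ) (hj₀ : 1 ≤ j₀) (hj₀' : j₀ ≤ m)
    (hc₀1 : 1 ≤ φ j₀) (hc₀n : φ j₀ ≤ n) :
    Submodule.span ℝ (Set.range (bvec α φ (fun _ => 1)
        (T₁ := Finset.Icc 1 (n - 1)) (T₂ := Finset.Icc 1 (m - 1))
        (T₃ := (Finset.Icc 1 n ∪ (Finset.Icc 1 m).image φ).erase 1)))
      = Submodule.span ℝ (CMNReactionVectors n m α φ) := by
  apply le_antisymm
  · rw [Submodule.span_le]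
    rintro v ⟨i, rfl⟩
    rcases i with i | j | x
    · obtain ⟨h1, h2⟩ := mem_Icc.mp i.2
      exact Submodule.subset_span (Or.inl ⟨i, h1, h2, Or.inl rfl⟩)
    · obtain ⟨h1, h2⟩ := mem_Icc.mp j.2
      exact Submodule.subset_span (Or.inr ⟨j, h1, h2, Or.inl rfl⟩)
    · show eS (x : ℕ) - eS 1 ∈ _
      have hx := x.2
      rw [Finset.mem_erase, Finset.mem_union] at hx
      rcases hx.2 with hA | hB
      · obtain ⟨h1, h2⟩ := mem_Icc.mp hA
        exact eSA_mem n m α φ h1 h2 le_rfl (by omega)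
      · obtain ⟨j, hj, hjx⟩ := Finset.mem_image.mp hB
        obtain ⟨hj1, hj2⟩ := mem_Icc.mp hj
        rw [← hjx]
        have hk : eS (φ j) - eS 1 = (eS (φ j) - eS (φ j₀)) + (eS (φ j₀) - eS 1) := by abel
        rw [hk]
        exact add_mem (eSB_mem n m α φ hj₀ hj₀' hj1 hj2)
          (eSA_mem n m α φ hc₀1 hc₀n le_rfl (by omega))
  · rw [Submodule.span_le]
    set R := Submodule.span ℝ (Set.range (bvec α φ (fun _ => 1)
        (T₁ := Finset.Icc 1 (n - 1)) (T₂ := Finset.Icc 1 (m - 1))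
        (T₃ := (Finset.Icc 1 n ∪ (Finset.Icc 1 m).image φ).erase 1))) with hR
    have hf : ∀ i, 1 ≤ i → i ≤ n - 1 → eC i - eS i - eE ∈ R := fun i h1 h2 =>
      Submodule.subset_span ⟨Sum.inl ⟨i, mem_Icc.mpr ⟨h1, h2⟩⟩, rfl⟩
    have hh : ∀ j, 1 ≤ j → j ≤ m - 1 → eD j - eS (φ j) - eC α ∈ R := fun j h1 h2 =>
      Submodule.subset_span ⟨Sum.inr (Sum.inl ⟨j, mem_Icc.mpr ⟨h1, h2⟩⟩), rfl⟩
    have hone : ∀ x ∈ Finset.Icc 1 n ∪ (Finset.Icc 1 m).image φ,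
        eS x - eS 1 ∈ R := by
      intro x hx
      by_cases h1 : x = 1
      · subst h1; rw [sub_self]; exact R.zero_mem
      · exact Submodule.subset_span
          ⟨Sum.inr (Sum.inr ⟨x, Finset.mem_erase.mpr ⟨h1, hx⟩⟩), rfl⟩
    rintro v (⟨i, hi1, hi2, hv | hv | hv⟩ | ⟨j, hj1, hj2, hv | hv | hv⟩) <;> subst hv
    · exact hf i hi1 hi2
    · rw [show eS i + eE - eC i = -(eC i - eS i - eE) from by abel]
      exact R.neg_mem (hf i hi1 hi2)
    · rw [show eS (i + 1) + eE - eC i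
          = (eS (i + 1) - eS 1) - (eS i - eS 1) - (eC i - eS i - eE) from by abel]
      refine sub_mem (sub_mem ?_ ?_) (hf i hi1 hi2)
      · exact hone _ (mem_union_left _ (mem_Icc.mpr ⟨by omega, by omega⟩))
      · exact hone _ (mem_union_left _ (mem_Icc.mpr ⟨hi1, by omega⟩))
    · exact hh j hj1 hj2
    · rw [show eS (φ j) + eC α - eD j = -(eD j - eS (φ j) - eC α) from by abel]
      exact R.neg_mem (hh j hj1 hj2)
    · rw [show eS (φ (j + 1)) + eC α - eD j
          = (eS (φ (j + 1)) - eS 1) - (eS (φ j) - eS 1) - (eD j - eS (φ j) - eC α)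
          from by abel]
      refine sub_mem (sub_mem ?_ ?_) (hh j hj1 hj2)
      · exact hone _ (mem_union_right _
          (Finset.mem_image.mpr ⟨j + 1, mem_Icc.mpr ⟨by omega, by omega⟩, rfl⟩))
      · exact hone _ (mem_union_right _
          (Finset.mem_image.mpr ⟨j, mem_Icc.mpr ⟨hj1, by omega⟩, rfl⟩))

/-- span equality, empty intersection case -/
lemma span_eq_empty (hn : 2 ≤ n) (hm : 2 ≤ m)
    (hdisj : Finset.Icc 1 n ∩ (Finset.Icc 1 m).image φ = ∅) :
    Submodule.span ℝ (Set.range (bvec α φ (fun x => if x ∈ Finset.Icc 1 n then 1 else φ 1)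
        (T₁ := Finset.Icc 1 (n - 1)) (T₂ := Finset.Icc 1 (m - 1))
        (T₃ := (Finset.Icc 1 n).erase 1 ∪ ((Finset.Icc 1 m).image φ).erase (φ 1))))
      = Submodule.span ℝ (CMNReactionVectors n m α φ) := by
  have hnotboth : ∀ x, x ∈ Finset.Icc 1 n → x ∈ (Finset.Icc 1 m).image φ → False := by
    intro x h1 h2
    have : x ∈ Finset.Icc 1 n ∩ (Finset.Icc 1 m).image φ := mem_inter.mpr ⟨h1, h2⟩
    rw [hdisj] at this
    exact absurd this (notMem_empty x)
  apply le_antisymm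
  · rw [Submodule.span_le]
    rintro v ⟨i, rfl⟩
    rcases i with i | j | x
    · obtain ⟨h1, h2⟩ := mem_Icc.mp i.2
      exact Submodule.subset_span (Or.inl ⟨i, h1, h2, Or.inl rfl⟩)
    · obtain ⟨h1, h2⟩ := mem_Icc.mp j.2
      exact Submodule.subset_span (Or.inr ⟨j, h1, h2, Or.inl rfl⟩)
    · show eS (x : ℕ) - eS (if (x : ℕ) ∈ Finset.Icc 1 n then 1 else φ 1) ∈ _
      have hx := x.2
      rw [Finset.mem_union] at hx
      rcases hx with hA | hB
      · have hA' := Finset.mem_of_mem_erase hA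
        rw [if_pos hA']
        obtain ⟨h1, h2⟩ := mem_Icc.mp hA'
        exact eSA_mem n m α φ h1 h2 le_rfl (by omega)
      · have hB' := Finset.mem_of_mem_erase hB
        have hnA : (x : ℕ) ∉ Finset.Icc 1 n := fun h => hnotboth _ h hB'
        rw [if_neg hnA]
        obtain ⟨j, hj, hjx⟩ := Finset.mem_image.mp hB'
        obtain ⟨hj1, hj2⟩ := mem_Icc.mp hj
        rw [← hjx]
        exact eSB_mem n m α φ le_rfl (by omega) hj1 hj2
  · rw [Submodule.span_le]
    set R := Submodule.span ℝ (Set.range (bvec α φ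
        (fun x => if x ∈ Finset.Icc 1 n then 1 else φ 1)
        (T₁ := Finset.Icc 1 (n - 1)) (T₂ := Finset.Icc 1 (m - 1))
        (T₃ := (Finset.Icc 1 n).erase 1 ∪ ((Finset.Icc 1 m).image φ).erase (φ 1)))) with hR
    have hf : ∀ i, 1 ≤ i → i ≤ n - 1 → eC i - eS i - eE ∈ R := fun i h1 h2 =>
      Submodule.subset_span ⟨Sum.inl ⟨i, mem_Icc.mpr ⟨h1, h2⟩⟩, rfl⟩
    have hh : ∀ j, 1 ≤ j → j ≤ m - 1 → eD j - eS (φ j) - eC α ∈ R := fun j h1 h2 =>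
      Submodule.subset_span ⟨Sum.inr (Sum.inl ⟨j, mem_Icc.mpr ⟨h1, h2⟩⟩), rfl⟩
    have honeA : ∀ x ∈ Finset.Icc 1 n, eS x - eS 1 ∈ R := by
      intro x hx
      by_cases h1 : x = 1
      · subst h1; rw [sub_self]; exact R.zero_mem
      · refine Submodule.subset_span
          ⟨Sum.inr (Sum.inr ⟨x, Finset.mem_union_left _ (Finset.mem_erase.mpr ⟨h1, hx⟩)⟩), ?_⟩
        show eS x - eS (if x ∈ Finset.Icc 1 n then 1 else φ 1) = eS x - eS 1
        rw [if_pos hx]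
    have honeB : ∀ j, 1 ≤ j → j ≤ m → eS (φ j) - eS (φ 1) ∈ R := by
      intro j hj1 hj2
      by_cases h1 : φ j = φ 1
      · rw [h1, sub_self]; exact R.zero_mem
      · have hmem : φ j ∈ (Finset.Icc 1 m).image φ :=
          Finset.mem_image.mpr ⟨j, mem_Icc.mpr ⟨hj1, hj2⟩, rfl⟩
        have hnA : φ j ∉ Finset.Icc 1 n := fun h => hnotboth _ h hmem
        refine Submodule.subset_span
          ⟨Sum.inr (Sum.inr ⟨φ j, Finset.mem_union_right _ (Finset.mem_erase.mpr ⟨h1, hmem⟩)⟩), ?_⟩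
        show eS (φ j) - eS (if φ j ∈ Finset.Icc 1 n then 1 else φ 1) = eS (φ j) - eS (φ 1)
        rw [if_neg hnA]
    rintro v (⟨i, hi1, hi2, hv | hv | hv⟩ | ⟨j, hj1, hj2, hv | hv | hv⟩) <;> subst hv
    · exact hf i hi1 hi2
    · rw [show eS i + eE - eC i = -(eC i - eS i - eE) from by abel]
      exact R.neg_mem (hf i hi1 hi2)
    · rw [show eS (i + 1) + eE - eC i
          = (eS (i + 1) - eS 1) - (eS i - eS 1) - (eC i - eS i - eE) from by abel]
      refine sub_mem (sub_mem ?_ ?_) (hf i hi1 hi2)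
      · exact honeA _ (mem_Icc.mpr ⟨by omega, by omega⟩)
      · exact honeA _ (mem_Icc.mpr ⟨hi1, by omega⟩)
    · exact hh j hj1 hj2
    · rw [show eS (φ j) + eC α - eD j = -(eD j - eS (φ j) - eC α) from by abel]
      exact R.neg_mem (hh j hj1 hj2)
    · rw [show eS (φ (j + 1)) + eC α - eD j
          = (eS (φ (j + 1)) - eS (φ 1)) - (eS (φ j) - eS (φ 1)) - (eD j - eS (φ j) - eC α)
          from by abel]
      refine sub_mem (sub_mem ?_ ?_) (hh j hj1 hj2)
      · exact honeB _ (by omega) (by omega)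
      · exact honeB _ hj1 (by omega)
end CMNAux

/-- The covalent modification network `(n, m, φ)` with
bifunctional enzyme `C α` has deficiency `δ = C - ℓ - s` (with `C = 2n + 2m - 2`
complexes, `ℓ = 2` linkage classes and `s` the dimension of the span of the
reaction vectors) equal to `0` if `[1,n] ∩ φ([1,m]) = ∅`, and equal to
`#([1,n] ∩ φ([1,m])) - 1` otherwise. -/
theorem cmn_deficiency
    (n m N α : ℕ) (hn : 2 ≤ n) (hm : 2 ≤ m) (hα : α ∈ Finset.Icc 1 (n - 1))
    (φ : ℕ → ℕ) (hφinj : Set.InjOn φ (Set.Icc 1 m))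
    (hφrange : ∀ j ∈ Finset.Icc 1 m, φ j ∈ Finset.Icc 1 N) :
    ((Finset.Icc 1 n ∩ (Finset.Icc 1 m).image φ = ∅ →
        ((2 * n + 2 * m - 2 : ℤ) - 2
            - Module.finrank ℝ (Submodule.span ℝ (CMNReactionVectors n m α φ)) = 0))
      ∧ (Finset.Icc 1 n ∩ (Finset.Icc 1 m).image φ ≠ ∅ →
        ((2 * n + 2 * m - 2 : ℤ) - 2
            - Module.finrank ℝ (Submodule.span ℝ (CMNReactionVectors n m α φ))
          = (Finset.Icc 1 n ∩ (Finset.Icc 1 m).image φ).card - 1))) := by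

  have hA : (Finset.Icc 1 n).card = n := by rw [Nat.card_Icc]; omega
  have hB : ((Finset.Icc 1 m).image φ).card = m := by
    rw [Finset.card_image_of_injOn (by rw [Finset.coe_Icc]; exact hφinj), Nat.card_Icc]
    omega
  have hc1 : (Finset.Icc 1 (n - 1)).card = n - 1 := by rw [Nat.card_Icc]; omega
  have hc2 : (Finset.Icc 1 (m - 1)).card = m - 1 := by rw [Nat.card_Icc]; omega
  have h1A : (1 : ℕ) ∈ Finset.Icc 1 n := mem_Icc.mpr ⟨le_rfl, by omega⟩
  have hφ1B : φ 1 ∈ (Finset.Icc 1 m).image φ :=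
    Finset.mem_image.mpr ⟨1, mem_Icc.mpr ⟨le_rfl, by omega⟩, rfl⟩
  constructor
  · -- empty intersection case
    intro hemp
    have hnotboth : ∀ x, x ∈ Finset.Icc 1 n → x ∈ (Finset.Icc 1 m).image φ → False := by
      intro x h1 h2
      have hx : x ∈ Finset.Icc 1 n ∩ (Finset.Icc 1 m).image φ := mem_inter.mpr ⟨h1, h2⟩
      rw [hemp] at hx
      exact absurd hx (notMem_empty x)
    set T₃ : Finset ℕ :=
      (Finset.Icc 1 n).erase 1 ∪ ((Finset.Icc 1 m).image φ).erase (φ 1) with hT₃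
    have h1T : (1 : ℕ) ∉ T₃ := by
      intro h
      rcases Finset.mem_union.mp h with h' | h'
      · exact absurd rfl (Finset.mem_erase.mp h').1
      · exact hnotboth 1 h1A (Finset.mem_of_mem_erase h')
    have hφ1T : φ 1 ∉ T₃ := by
      intro h
      rcases Finset.mem_union.mp h with h' | h'
      · exact hnotboth (φ 1) (Finset.mem_of_mem_erase h') hφ1B
      · exact absurd rfl (Finset.mem_erase.mp h').1
    have hc : ∀ x ∈ T₃, (if x ∈ Finset.Icc 1 n then 1 else φ 1) ∉ T₃ := by
      intro x _
      split_ifs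
      · exact h1T
      · exact hφ1T
    have hli := CMNAux.bvec_li α φ (fun x => if x ∈ Finset.Icc 1 n then 1 else φ 1)
      (Finset.Icc 1 (n - 1)) (Finset.Icc 1 (m - 1)) T₃ hc
    have hfr := finrank_span_eq_card hli
    rw [CMNAux.span_eq_empty n m α φ hn hm hemp] at hfr
    have hdisj : Disjoint ((Finset.Icc 1 n).erase 1) (((Finset.Icc 1 m).image φ).erase (φ 1)) := by
      rw [Finset.disjoint_left]
      intro a ha hb
      exact hnotboth a (Finset.mem_of_mem_erase ha) (Finset.mem_of_mem_erase hb)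
    have hT₃card : T₃.card = (n - 1) + (m - 1) := by
      rw [hT₃, Finset.card_union_of_disjoint hdisj, Finset.card_erase_of_mem h1A,
        Finset.card_erase_of_mem hφ1B, hA, hB]
    have hcard : Fintype.card
        (↥(Finset.Icc 1 (n - 1)) ⊕ ↥(Finset.Icc 1 (m - 1)) ⊕ ↥T₃)
        = (n - 1) + ((m - 1) + ((n - 1) + (m - 1))) := by
      simp [Fintype.card_sum, Fintype.card_coe, hc1, hc2, hT₃card]
    rw [hcard] at hfr
    rw [hfr]
    omega
  · -- nonempty intersection case
    intro hne
    obtain ⟨c₀, hc₀⟩ := Finset.nonempty_of_ne_empty hne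
    obtain ⟨hc₀A, hc₀B⟩ := mem_inter.mp hc₀
    obtain ⟨j₀, hj₀, hj₀c⟩ := Finset.mem_image.mp hc₀B
    obtain ⟨hj₀₁, hj₀₂⟩ := mem_Icc.mp hj₀
    obtain ⟨hc₀₁, hc₀₂⟩ := mem_Icc.mp hc₀A
    set T₃ : Finset ℕ :=
      (Finset.Icc 1 n ∪ (Finset.Icc 1 m).image φ).erase 1 with hT₃
    have hc : ∀ x ∈ T₃, (fun _ : ℕ => 1) x ∉ T₃ := fun x _ =>
      Finset.notMem_erase 1 _
    have hli := CMNAux.bvec_li α φ (fun _ => 1)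
      (Finset.Icc 1 (n - 1)) (Finset.Icc 1 (m - 1)) T₃ hc
    have hfr := finrank_span_eq_card hli
    rw [CMNAux.span_eq_nonempty n m α φ hn hm j₀ hj₀₁ hj₀₂
      (by rw [hj₀c]; exact hc₀₁) (by rw [hj₀c]; exact hc₀₂)] at hfr
    have hUcard : (Finset.Icc 1 n ∪ (Finset.Icc 1 m).image φ).card
        + (Finset.Icc 1 n ∩ (Finset.Icc 1 m).image φ).card = n + m := by
      rw [Finset.card_union_add_card_inter, hA, hB]
    have hT₃card : T₃.card = (Finset.Icc 1 n ∪ (Finset.Icc 1 m).image φ).card - 1 :=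
      Finset.card_erase_of_mem (Finset.mem_union_left _ h1A)
    have hkn : (Finset.Icc 1 n ∩ (Finset.Icc 1 m).image φ).card ≤ (Finset.Icc 1 n).card :=
      Finset.card_le_card Finset.inter_subset_left
    have hk1 : 1 ≤ (Finset.Icc 1 n ∩ (Finset.Icc 1 m).image φ).card :=
      Finset.card_pos.mpr ⟨c₀, hc₀⟩
    have hcard : Fintype.card
        (↥(Finset.Icc 1 (n - 1)) ⊕ ↥(Finset.Icc 1 (m - 1)) ⊕ ↥T₃)
        = (n - 1) + ((m - 1) + T₃.card) := by
      simp [Fintype.card_sum, Fintype.card_coe, hc1, hc2]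
    rw [hcard] at hfr
    rw [hfr]
    omega
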